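/- Let (f,φ) be a classical solution of the reformulated Nordström–Vlasov system as in the context. Define the local energy e(t,x) = ∫_{ℝ³} √(e^{2φ(t,x)}+|p|²) f(t,x,p) dp + (1/2)(∂_tφ(t,x))² + (1/2)|∇_xφ(t,x)|² and the local momentum q(t,x) = ∫_{ℝ³} p f(t,x,p) dp − ∂_tφ(t,x) ∇_xφ(t,x). Then the local energy conservation law ∂_t e(t,x) + div_x q(t,x) = 0 holds at every point (t,x) ∈ ℝ×ℝ³. -/

import Mathlib

open MeasureTheory Real Topology Filter Set

noncomputable section

/-- Euclidean 3-space. -/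
abbrev E3 := EuclideanSpace ℝ (Fin 3)

/-- Partial derivative of `g` at `x` in the `i`-th coordinate direction. -/
def pd (g : E3 → ℝ) (x : E3) (i : Fin 3) : ℝ :=
  fderiv ℝ g x (EuclideanSpace.single i 1)

namespace NVaux

def Phi (φ : ℝ → E3 → ℝ) : ℝ × E3 → ℝ := fun w => φ w.1 w.2
def dPhi (φ : ℝ → E3 → ℝ) := fderiv ℝ (Phi φ)
def d2Phi (φ : ℝ → E3 → ℝ) := fderiv ℝ (dPhi φ)
def FF (f : ℝ → E3 → E3 → ℝ) : ℝ × E3 × E3 → ℝ := fun w => f w.1 w.2.1 w.2.2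
def dFF (f : ℝ → E3 → E3 → ℝ) := fderiv ℝ (FF f)

def eT : ℝ × E3 := (1, 0)
def eX (i : Fin 3) : ℝ × E3 := (0, EuclideanSpace.single i 1)
def vT : ℝ × E3 × E3 := (1, 0, 0)
def vX (i : Fin 3) : ℝ × E3 × E3 := ((0:ℝ), EuclideanSpace.single i 1, (0:E3))
def vP (i : Fin 3) : ℝ × E3 × E3 := ((0:ℝ), (0:E3), EuclideanSpace.single i 1)

variable {X G : Type*} [NormedAddCommGroup X] [NormedSpace ℝ X]
  [NormedAddCommGroup G] [NormedSpace ℝ G]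

lemma hasDerivAt_slice {Ψ : ℝ × X → G} (hΨ : Differentiable ℝ Ψ) (t : ℝ) (x : X) :
    HasDerivAt (fun s => Ψ (s, x)) (fderiv ℝ Ψ (t, x) (1, 0)) t :=
  (hΨ (t, x)).hasFDerivAt.comp_hasDerivAt t ((hasDerivAt_id t).prodMk (hasDerivAt_const t x))

lemma hasFDerivAt_slice {Ψ : ℝ × X → G} (hΨ : Differentiable ℝ Ψ) (t : ℝ) (x : X) :
    HasFDerivAt (fun y => Ψ (t, y)) ((fderiv ℝ Ψ (t, x)).comp
      ((0 : X →L[ℝ] ℝ).prod (ContinuousLinearMap.id ℝ X))) x :=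
  (hΨ (t, x)).hasFDerivAt.comp x ((hasFDerivAt_const t x).prodMk (hasFDerivAt_id x))

section conv
variable {φ : ℝ → E3 → ℝ} {f : ℝ → E3 → E3 → ℝ}

-- first derivatives of φ
lemma cT (hΦd : Differentiable ℝ (Phi φ)) (t : ℝ) (x : E3) :
    deriv (fun s => φ s x) t = dPhi φ (t, x) eT :=
  (hasDerivAt_slice hΦd t x).deriv

lemma cX (hΦd : Differentiable ℝ (Phi φ)) (t : ℝ) (x : E3) (i : Fin 3) :
    pd (φ t) x i = dPhi φ (t, x) (eX i) := by
  have h := (hasFDerivAt_slice hΦd t x).fderiv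
  calc pd (φ t) x i = (fderiv ℝ (fun y => Phi φ (t, y)) x) (EuclideanSpace.single i 1) := rfl
  _ = dPhi φ (t, x) (eX i) := by rw [h]; simp [eX, dPhi]

-- derivative-in-t of s ↦ dPhi (s,x) v
lemma hasDerivAt_dPhi_t (hΦ'd : Differentiable ℝ (dPhi φ)) (t : ℝ) (x : E3) (v : ℝ × E3) :
    HasDerivAt (fun s => dPhi φ (s, x) v) (d2Phi φ (t, x) eT v) t := by
  have h := (hasDerivAt_slice hΦ'd t x).clm_apply (hasDerivAt_const t v)
  simpa [d2Phi, eT] using h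

lemma hasFDerivAt_dPhi_x (hΦ'd : Differentiable ℝ (dPhi φ)) (t : ℝ) (x : E3) (v : ℝ × E3) :
    HasFDerivAt (fun y => dPhi φ (t, y) v)
      ((ContinuousLinearMap.apply ℝ ℝ v).comp ((d2Phi φ (t, x)).comp
        ((0 : E3 →L[ℝ] ℝ).prod (ContinuousLinearMap.id ℝ E3)))) x := by
  have h := (ContinuousLinearMap.apply ℝ ℝ v).hasFDerivAt.comp x (hasFDerivAt_slice hΦ'd t x)
  exact h

lemma cTT (hΦd : Differentiable ℝ (Phi φ)) (hΦ'd : Differentiable ℝ (dPhi φ)) (t : ℝ) (x : E3) :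
    deriv (fun s => deriv (fun s' => φ s' x) s) t = d2Phi φ (t, x) eT eT := by
  simp only [cT hΦd]
  exact (hasDerivAt_dPhi_t hΦ'd t x eT).deriv

lemma cTX (hΦd : Differentiable ℝ (Phi φ)) (hΦ'd : Differentiable ℝ (dPhi φ)) (t : ℝ) (x : E3)
    (i : Fin 3) : deriv (fun s => pd (φ s) x i) t = d2Phi φ (t, x) eT (eX i) := by
  simp only [cX hΦd]
  exact (hasDerivAt_dPhi_t hΦ'd t x (eX i)).deriv

lemma cXT (hΦd : Differentiable ℝ (Phi φ)) (hΦ'd : Differentiable ℝ (dPhi φ)) (t : ℝ) (x : E3)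
    (i : Fin 3) : pd (fun y => deriv (fun s => φ s y) t) x i = d2Phi φ (t, x) (eX i) eT := by
  simp only [cT hΦd]
  have h := (hasFDerivAt_dPhi_x hΦ'd t x eT).fderiv
  calc pd (fun y => dPhi φ (t, y) eT) x i
      = (fderiv ℝ (fun y => dPhi φ (t, y) eT) x) (EuclideanSpace.single i 1) := rfl
  _ = d2Phi φ (t, x) (eX i) eT := by rw [h]; simp [eX]

lemma cXX (hΦd : Differentiable ℝ (Phi φ)) (hΦ'd : Differentiable ℝ (dPhi φ)) (t : ℝ) (x : E3)
    (i j : Fin 3) : pd (fun y => pd (φ t) y j) x i = d2Phi φ (t, x) (eX i) (eX j) := by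
  simp only [cX hΦd]
  have h := (hasFDerivAt_dPhi_x hΦ'd t x (eX j)).fderiv
  calc pd (fun y => dPhi φ (t, y) (eX j)) x i
      = (fderiv ℝ (fun y => dPhi φ (t, y) (eX j)) x) (EuclideanSpace.single i 1) := rfl
  _ = d2Phi φ (t, x) (eX i) (eX j) := by rw [h]; simp [eX]

-- f conversions
lemma fT (hFd : Differentiable ℝ (FF f)) (t : ℝ) (x p : E3) :
    deriv (fun s => f s x p) t = dFF f (t, x, p) vT :=
  (hasDerivAt_slice hFd t (x, p)).deriv

lemma hasFDerivAt_f_x (hFd : Differentiable ℝ (FF f)) (t : ℝ) (x p : E3) :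
    HasFDerivAt (fun y => f t y p) ((dFF f (t, x, p)).comp
      ((0 : E3 →L[ℝ] ℝ).prod ((ContinuousLinearMap.id ℝ E3).prod (0 : E3 →L[ℝ] E3)))) x :=
  (hFd (t, x, p)).hasFDerivAt.comp (f := fun y : E3 => (t, y, p)) x
    ((hasFDerivAt_const t x).prodMk ((hasFDerivAt_id x).prodMk (hasFDerivAt_const p x)))

lemma hasFDerivAt_f_p (hFd : Differentiable ℝ (FF f)) (t : ℝ) (x p : E3) :
    HasFDerivAt (fun q => f t x q) ((dFF f (t, x, p)).comp
      ((0 : E3 →L[ℝ] ℝ).prod ((0 : E3 →L[ℝ] E3).prod (ContinuousLinearMap.id ℝ E3)))) p :=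
  (hFd (t, x, p)).hasFDerivAt.comp (f := fun q : E3 => (t, x, q)) p
    ((hasFDerivAt_const t p).prodMk ((hasFDerivAt_const x p).prodMk (hasFDerivAt_id p)))

lemma fX (hFd : Differentiable ℝ (FF f)) (t : ℝ) (x p : E3) (i : Fin 3) :
    pd (fun y => f t y p) x i = dFF f (t, x, p) (vX i) := by
  have h := (hasFDerivAt_f_x hFd t x p).fderiv
  calc pd (fun y => f t y p) x i
      = (fderiv ℝ (fun y => f t y p) x) (EuclideanSpace.single i 1) := rfl
  _ = dFF f (t, x, p) (vX i) := by rw [h]; simp [vX]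

lemma fP (hFd : Differentiable ℝ (FF f)) (t : ℝ) (x p : E3) (i : Fin 3) :
    pd (fun q => f t x q) p i = dFF f (t, x, p) (vP i) := by
  have h := (hasFDerivAt_f_p hFd t x p).fderiv
  calc pd (fun q => f t x q) p i
      = (fderiv ℝ (fun q => f t x q) p) (EuclideanSpace.single i 1) := rfl
  _ = dFF f (t, x, p) (vP i) := by rw [h]; simp [vP]


lemma cSq (hΦd : Differentiable ℝ (Phi φ)) (t : ℝ) (x p : E3) (i : Fin 3) :
    pd (fun y => Real.sqrt (Real.exp (2 * φ t y) + ‖p‖ ^ 2)) x i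
      = Real.exp (2 * φ t x) * dPhi φ (t, x) (eX i)
          / Real.sqrt (Real.exp (2 * φ t x) + ‖p‖ ^ 2) := by
  have hpos : 0 < Real.exp (2 * φ t x) + ‖p‖ ^ 2 := by positivity
  have h0 : HasFDerivAt (fun y => Phi φ (t, y)) ((dPhi φ (t, x)).comp
      ((0 : E3 →L[ℝ] ℝ).prod (ContinuousLinearMap.id ℝ E3))) x := hasFDerivAt_slice hΦd t x
  have h4 := (((h0.const_mul (2:ℝ)).exp).add_const (‖p‖ ^ 2)).sqrt (ne_of_gt hpos)
  have h5 := h4.fderiv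
  have hσ : Real.sqrt (Real.exp (2 * φ t x) + ‖p‖ ^ 2) ≠ 0 :=
    ne_of_gt (Real.sqrt_pos.mpr hpos)
  calc pd (fun y => Real.sqrt (Real.exp (2 * φ t y) + ‖p‖ ^ 2)) x i
      = (fderiv ℝ (fun y => Real.sqrt (Real.exp (2 * Phi φ (t, y)) + ‖p‖ ^ 2)) x)
          (EuclideanSpace.single i 1) := rfl
  _ = _ := by
      rw [h5]
      simp only [ContinuousLinearMap.coe_smul', Pi.smul_apply,
        ContinuousLinearMap.coe_comp', Function.comp_apply,
        ContinuousLinearMap.prod_apply, ContinuousLinearMap.zero_apply,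
        ContinuousLinearMap.coe_id', id_eq, smul_eq_mul]
      show (1 / (2 * Real.sqrt (Real.exp (2 * Phi φ (t, x)) + ‖p‖ ^ 2))) *
          (Real.exp (2 * Phi φ (t, x)) * (2 * dPhi φ (t, x) (0, EuclideanSpace.single i 1))) = _
      rw [show dPhi φ (t, x) (eX i) = dPhi φ (t, x) (0, EuclideanSpace.single i 1) from rfl]
      simp only [Phi]
      field_simp

lemma symmPhi (hΦ : ContDiff ℝ 2 (Phi φ)) (t : ℝ) (x : E3) (u v : ℝ × E3) :
    d2Phi φ (t, x) u v = d2Phi φ (t, x) v u := by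
  have hd : ∀ y, HasFDerivAt (Phi φ) (dPhi φ y) y :=
    fun y => (hΦ.differentiable two_ne_zero y).hasFDerivAt
  have h2 : HasFDerivAt (dPhi φ) (d2Phi φ (t, x)) (t, x) :=
    (((hΦ.fderiv_right (m := 1) (le_refl 2)).differentiable one_ne_zero) (t, x)).hasFDerivAt
  exact second_derivative_symmetric hd h2 u v

lemma integral_fderiv_apply_eq_zero {g : E3 → ℝ} (hg : ContDiff ℝ 1 g)
    (hsupp : HasCompactSupport g) (v : E3) :
    ∫ p : E3, fderiv ℝ g p v = 0 := by
  obtain ⟨C, hC⟩ := hg.lipschitzWith_of_hasCompactSupport hsupp one_ne_zero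
  have h := LipschitzWith.integral_lineDeriv_mul_eq (μ := volume)
      (LipschitzWith.const (1:ℝ)) hC hsupp v
  have h1 : ∀ x : E3, lineDeriv ℝ (fun _ => (1:ℝ)) x v = 0 := fun x => by
    rw [(differentiableAt_const (1:ℝ)).lineDeriv_eq_fderiv]; simp
  have h2 : ∀ x : E3, lineDeriv ℝ g x (-v) = -(fderiv ℝ g x v) := fun x => by
    rw [(hg.differentiable one_ne_zero x).lineDeriv_eq_fderiv]; simp
  simp only [h1, h2, zero_mul, integral_zero, mul_one] at h
  rw [integral_neg] at h
  linarith [h]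

end conv
end NVaux

/-- `(f, φ)` is a classical solution of the reformulated Nordström–Vlasov system:
`f` is `C¹` and nonnegative, `φ` is `C²`, the Vlasov equation and the wave equation hold
pointwise, and `f` has locally uniformly compact support in the momentum variable. -/
def NVSystem (f : ℝ → E3 → E3 → ℝ) (φ : ℝ → E3 → ℝ) : Prop :=
  (ContDiff ℝ 1 (fun w : ℝ × E3 × E3 => f w.1 w.2.1 w.2.2)) ∧
  (∀ t x p, 0 ≤ f t x p) ∧
  (ContDiff ℝ 2 (fun w : ℝ × E3 => φ w.1 w.2)) ∧
  (∀ (t : ℝ) (x p : E3),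
    deriv (fun s => f s x p) t
    + (∑ i, (p i / Real.sqrt (Real.exp (2 * φ t x) + ‖p‖ ^ 2)) * pd (fun y => f t y p) x i)
    - (∑ i, pd (fun y => Real.sqrt (Real.exp (2 * φ t y) + ‖p‖ ^ 2)) x i
        * pd (fun w => f t x w) p i) = 0) ∧
  (∀ (t : ℝ) (x : E3),
    deriv (fun s => deriv (fun s' => φ s' x) s) t - (∑ i, pd (fun y => pd (φ t) y i) x i)
    = - Real.exp (2 * φ t x)
        * ∫ p : E3, f t x p / Real.sqrt (Real.exp (2 * φ t x) + ‖p‖ ^ 2)) ∧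
  (∀ K : Set (ℝ × E3), IsCompact K →
    ∃ R > (0 : ℝ), ∀ (t : ℝ) (x p : E3), (t, x) ∈ K → R ≤ ‖p‖ → f t x p = 0)

set_option maxHeartbeats 2000000 in
/-- local energy conservation ∂ₜe + div_x q = 0 for solutions of the
reformulated Nordström–Vlasov system. -/
theorem local_energy_conservation
    (f : ℝ → E3 → E3 → ℝ) (φ : ℝ → E3 → ℝ) (hsys : NVSystem f φ)
    (eloc : ℝ → E3 → ℝ) (qloc : Fin 3 → ℝ → E3 → ℝ)
    (heloc : ∀ t x, eloc t x
      = (∫ p : E3, Real.sqrt (Real.exp (2 * φ t x) + ‖p‖ ^ 2) * f t x p)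
        + (1/2) * (deriv (fun s => φ s x) t) ^ 2
        + (1/2) * ∑ i, (pd (φ t) x i) ^ 2)
    (hqloc : ∀ i t x, qloc i t x
      = (∫ p : E3, p i * f t x p) - deriv (fun s => φ s x) t * pd (φ t) x i) :
    ∀ (t : ℝ) (x : E3),
      deriv (fun s => eloc s x) t + ∑ i, pd (fun y => qloc i t y) x i = 0 := by
  obtain ⟨hF1, hfpos, hΦ2, hVl, hWv, hsupp⟩ := hsys
  intro t₀ x₀
  have hΦc : ContDiff ℝ 2 (NVaux.Phi φ) := hΦ2
  have hFc : ContDiff ℝ 1 (NVaux.FF f) := hF1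
  have hΦd : Differentiable ℝ (NVaux.Phi φ) := hΦc.differentiable two_ne_zero
  have hΦ'c : ContDiff ℝ 1 (NVaux.dPhi φ) := hΦc.fderiv_right (le_refl 2)
  have hΦ'd : Differentiable ℝ (NVaux.dPhi φ) := hΦ'c.differentiable one_ne_zero
  have hFd : Differentiable ℝ (NVaux.FF f) := hFc.differentiable one_ne_zero
  have hdΦcont : Continuous (NVaux.dPhi φ) := hΦ'c.continuous
  have hdFcont : Continuous (NVaux.dFF f) := hFc.continuous_fderiv one_ne_zero
  -- compact support in p
  obtain ⟨R₂, hR₂pos, hR₂⟩ := hsupp ((Set.Icc (t₀-2) (t₀+2)) ×ˢ (Metric.closedBall x₀ 2))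
    (isCompact_Icc.prod (isCompact_closedBall _ _))
  have hfzero : ∀ s (y p : E3), |s - t₀| ≤ 1 → dist y x₀ ≤ 1 → R₂ + 1 ≤ ‖p‖ → f s y p = 0 := by
    intro s y p hs hy hp
    refine hR₂ s y p ⟨?_, ?_⟩ (by linarith)
    · rw [Set.mem_Icc]; rw [abs_le] at hs; constructor <;> linarith
    · exact Metric.mem_closedBall.mpr (by linarith)
  have hdFzero : ∀ s (y p : E3), |s - t₀| ≤ 1 → dist y x₀ ≤ 1 → R₂ + 1 ≤ ‖p‖ →
      NVaux.dFF f (s, y, p) = 0 := by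
    intro s y p hs hy hp
    have hU : IsOpen {w : ℝ × E3 × E3 | |w.1 - t₀| < 2 ∧ dist w.2.1 x₀ < 2 ∧ R₂ < ‖w.2.2‖} := by
      refine IsOpen.inter ?_ (IsOpen.inter ?_ ?_)
      · exact isOpen_lt ((continuous_fst.sub continuous_const).abs) continuous_const
      · exact isOpen_lt ((continuous_snd.fst).dist continuous_const) continuous_const
      · exact isOpen_lt continuous_const continuous_snd.snd.norm
    have hmem : (s, y, p) ∈ {w : ℝ × E3 × E3 | |w.1 - t₀| < 2 ∧ dist w.2.1 x₀ < 2 ∧ R₂ < ‖w.2.2‖} :=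
      ⟨lt_of_le_of_lt hs one_lt_two, lt_of_le_of_lt hy one_lt_two, by linarith⟩
    have hEq : NVaux.FF f =ᶠ[𝓝 (s, y, p)] fun _ => (0:ℝ) := by
      filter_upwards [hU.mem_nhds hmem] with w hw
      refine hR₂ w.1 w.2.1 w.2.2 ⟨?_, ?_⟩ (le_of_lt hw.2.2)
      · rw [Set.mem_Icc]; rw [abs_lt] at hw; rcases hw with ⟨h1, _⟩
        constructor <;> linarith [h1.1, h1.2]
      · exact Metric.mem_closedBall.mpr (le_of_lt hw.2.1)
    calc NVaux.dFF f (s, y, p) = fderiv ℝ (fun _ => (0:ℝ)) (s, y, p) := hEq.fderiv_eq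
    _ = 0 := by simp
  -- restricted measure
  have hBmeas : MeasurableSet (Metric.closedBall (0:E3) (R₂+1)) := measurableSet_closedBall
  have hBcomp : IsCompact (Metric.closedBall (0:E3) (R₂+1)) := isCompact_closedBall _ _
  have hint_eq : ∀ (h : E3 → ℝ), (∀ p : E3, R₂ + 1 ≤ ‖p‖ → h p = 0) →
      ∫ p, h p ∂(volume.restrict (Metric.closedBall (0:E3) (R₂+1))) = ∫ p, h p := by
    intro h hh
    refine setIntegral_eq_integral_of_forall_compl_eq_zero (fun p hp => hh p ?_)
    have := Metric.mem_closedBall.not.mp hp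
    rw [dist_zero_right] at this
    linarith [not_le.mp this]
  -- Part 1 : time derivative of the local energy
  have hσpos : ∀ (s : ℝ) (p : E3), 0 < Real.sqrt (Real.exp (2 * φ s x₀) + ‖p‖ ^ 2) :=
    fun s p => Real.sqrt_pos.mpr (by positivity)
  have hGt'deriv : ∀ (s : ℝ) (p : E3), HasDerivAt
      (fun s' => Real.sqrt (Real.exp (2 * φ s' x₀) + ‖p‖ ^ 2) * f s' x₀ p)
      ((Real.exp (2 * φ s x₀) * NVaux.dPhi φ (s, x₀) NVaux.eT
          / Real.sqrt (Real.exp (2 * φ s x₀) + ‖p‖ ^ 2)) * f s x₀ p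
        + Real.sqrt (Real.exp (2 * φ s x₀) + ‖p‖ ^ 2) * NVaux.dFF f (s, x₀, p) NVaux.vT) s := by
    intro s p
    have h1 : HasDerivAt (fun s' => φ s' x₀) (NVaux.dPhi φ (s, x₀) NVaux.eT) s :=
      NVaux.hasDerivAt_slice hΦd s x₀
    have hpos : 0 < Real.exp (2 * φ s x₀) + ‖p‖ ^ 2 := by positivity
    have h4 := (((h1.const_mul (2:ℝ)).exp).add_const (‖p‖ ^ 2)).sqrt (ne_of_gt hpos)
    have h5 : HasDerivAt (fun s' => f s' x₀ p) (NVaux.dFF f (s, x₀, p) NVaux.vT) s :=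
      NVaux.hasDerivAt_slice hFd s (x₀, p)
    have h6 := h4.mul h5
    refine h6.congr_deriv ?_
    have hσ : Real.sqrt (Real.exp (2 * φ s x₀) + ‖p‖ ^ 2) ≠ 0 := ne_of_gt (hσpos s p)
    ring
  have hcσ : Continuous fun w : ℝ × E3 => Real.sqrt (Real.exp (2 * φ w.1 x₀) + ‖w.2‖ ^ 2) :=
    ((continuous_exp.comp (continuous_const.mul
      (hΦc.continuous.comp (continuous_fst.prodMk continuous_const)))).add
      ((continuous_snd.norm).pow 2)).sqrt
  have hcf : Continuous fun w : ℝ × E3 => f w.1 x₀ w.2 :=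
    hFc.continuous.comp (continuous_fst.prodMk (continuous_const.prodMk continuous_snd))
  have hcexp : Continuous fun w : ℝ × E3 => Real.exp (2 * φ w.1 x₀) :=
    continuous_exp.comp (continuous_const.mul
      (hΦc.continuous.comp (continuous_fst.prodMk continuous_const)))
  have hcdphiT : Continuous fun w : ℝ × E3 => NVaux.dPhi φ (w.1, x₀) NVaux.eT :=
    (ContinuousLinearMap.apply ℝ ℝ NVaux.eT).continuous.comp
      (hdΦcont.comp (continuous_fst.prodMk continuous_const))
  have hcdFT : Continuous fun w : ℝ × E3 => NVaux.dFF f (w.1, x₀, w.2) NVaux.vT :=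
    (ContinuousLinearMap.apply ℝ ℝ NVaux.vT).continuous.comp
      (hdFcont.comp (continuous_fst.prodMk (continuous_const.prodMk continuous_snd)))
  have hcGt : Continuous fun w : ℝ × E3 =>
      Real.sqrt (Real.exp (2 * φ w.1 x₀) + ‖w.2‖ ^ 2) * f w.1 x₀ w.2 := hcσ.mul hcf
  have hcGt' : Continuous fun w : ℝ × E3 =>
      (Real.exp (2 * φ w.1 x₀) * NVaux.dPhi φ (w.1, x₀) NVaux.eT
        / Real.sqrt (Real.exp (2 * φ w.1 x₀) + ‖w.2‖ ^ 2)) * f w.1 x₀ w.2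
      + Real.sqrt (Real.exp (2 * φ w.1 x₀) + ‖w.2‖ ^ 2) * NVaux.dFF f (w.1, x₀, w.2) NVaux.vT :=
    (((hcexp.mul hcdphiT).div hcσ (fun w => ne_of_gt (hσpos w.1 w.2))).mul hcf).add
      (hcσ.mul hcdFT)
  obtain ⟨M1, hM1⟩ := ((isCompact_Icc (a := t₀ - 1) (b := t₀ + 1)).prod
    hBcomp).exists_bound_of_continuousOn hcGt'.continuousOn
  have hbnd1 : ∀ᵐ p ∂(volume.restrict (Metric.closedBall (0:E3) (R₂+1))),
      ∀ s ∈ Metric.ball t₀ (1:ℝ),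
        ‖(Real.exp (2 * φ s x₀) * NVaux.dPhi φ (s, x₀) NVaux.eT
            / Real.sqrt (Real.exp (2 * φ s x₀) + ‖p‖ ^ 2)) * f s x₀ p
          + Real.sqrt (Real.exp (2 * φ s x₀) + ‖p‖ ^ 2) * NVaux.dFF f (s, x₀, p) NVaux.vT‖
          ≤ M1 := by
    filter_upwards [ae_restrict_mem hBmeas] with p hp s hs
    refine hM1 (s, p) ⟨?_, hp⟩
    have h := Metric.mem_ball.mp hs
    rw [Real.dist_eq] at h
    rw [Set.mem_Icc]
    rw [abs_lt] at h
    constructor <;> linarith [h.1, h.2]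
  have key1 := hasDerivAt_integral_of_dominated_loc_of_deriv_le
    (μ := volume.restrict (Metric.closedBall (0:E3) (R₂+1))) (x₀ := t₀)
    (F := fun s p => Real.sqrt (Real.exp (2 * φ s x₀) + ‖p‖ ^ 2) * f s x₀ p)
    (F' := fun s p => (Real.exp (2 * φ s x₀) * NVaux.dPhi φ (s, x₀) NVaux.eT
          / Real.sqrt (Real.exp (2 * φ s x₀) + ‖p‖ ^ 2)) * f s x₀ p
        + Real.sqrt (Real.exp (2 * φ s x₀) + ‖p‖ ^ 2) * NVaux.dFF f (s, x₀, p) NVaux.vT)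
    (bound := fun _ => M1) (Metric.ball_mem_nhds t₀ one_pos)
    (Eventually.of_forall fun s =>
      ((hcGt.comp (continuous_const.prodMk continuous_id)).aestronglyMeasurable))
    ((hcGt.comp (continuous_const.prodMk continuous_id)).continuousOn.integrableOn_compact
      hBcomp)
    ((hcGt'.comp (continuous_const.prodMk continuous_id)).aestronglyMeasurable)
    hbnd1 (integrableOn_const measure_closedBall_lt_top.ne)
    (Eventually.of_forall fun p s _ => hGt'deriv s p)
  have hDv : ∀ v : ℝ × E3, HasDerivAt (fun s => NVaux.dPhi φ (s, x₀) v)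
      (NVaux.d2Phi φ (t₀, x₀) NVaux.eT v) t₀ := fun v => NVaux.hasDerivAt_dPhi_t hΦ'd t₀ x₀ v
  have hA1 : HasDerivAt (fun s => 1/2 * (NVaux.dPhi φ (s, x₀) NVaux.eT) ^ 2)
      (NVaux.dPhi φ (t₀, x₀) NVaux.eT * NVaux.d2Phi φ (t₀, x₀) NVaux.eT NVaux.eT) t₀ := by
    have h := ((hDv NVaux.eT).pow 2).const_mul (1/2 : ℝ)
    refine h.congr_deriv ?_
    push_cast
    ring
  have hA2 : HasDerivAt (fun s => 1/2 * ∑ i, (NVaux.dPhi φ (s, x₀) (NVaux.eX i)) ^ 2)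
      (∑ i, NVaux.dPhi φ (t₀, x₀) (NVaux.eX i)
        * NVaux.d2Phi φ (t₀, x₀) NVaux.eT (NVaux.eX i)) t₀ := by
    have h := (HasDerivAt.sum (fun i (_ : i ∈ Finset.univ) =>
      ((hDv (NVaux.eX i)).pow 2))).const_mul (1/2 : ℝ)
    refine h.congr_deriv ?_
    rw [Finset.mul_sum]
    refine Finset.sum_congr rfl fun i _ => ?_
    push_cast
    ring
  have hEder : HasDerivAt (fun s => eloc s x₀)
      ((∫ p, ((Real.exp (2 * φ t₀ x₀) * NVaux.dPhi φ (t₀, x₀) NVaux.eT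
            / Real.sqrt (Real.exp (2 * φ t₀ x₀) + ‖p‖ ^ 2)) * f t₀ x₀ p
          + Real.sqrt (Real.exp (2 * φ t₀ x₀) + ‖p‖ ^ 2) * NVaux.dFF f (t₀, x₀, p) NVaux.vT)
          ∂(volume.restrict (Metric.closedBall (0:E3) (R₂+1)))
        + NVaux.dPhi φ (t₀, x₀) NVaux.eT * NVaux.d2Phi φ (t₀, x₀) NVaux.eT NVaux.eT)
        + ∑ i, NVaux.dPhi φ (t₀, x₀) (NVaux.eX i)
            * NVaux.d2Phi φ (t₀, x₀) NVaux.eT (NVaux.eX i)) t₀ := by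
    refine HasDerivAt.congr_of_eventuallyEq ((key1.2.add hA1).add hA2) ?_
    filter_upwards [Metric.ball_mem_nhds t₀ one_pos] with s hs
    have hs1 : |s - t₀| ≤ 1 := by
      have h := Metric.mem_ball.mp hs
      rw [Real.dist_eq] at h
      exact le_of_lt h
    rw [heloc s x₀]
    have h1 : (∫ p : E3, Real.sqrt (Real.exp (2 * φ s x₀) + ‖p‖ ^ 2) * f s x₀ p)
        = ∫ p, Real.sqrt (Real.exp (2 * φ s x₀) + ‖p‖ ^ 2) * f s x₀ p
            ∂(volume.restrict (Metric.closedBall (0:E3) (R₂+1))) := by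
      refine (hint_eq _ fun p hp => ?_).symm
      rw [hfzero s x₀ p hs1 (by simp) hp, mul_zero]
    rw [h1, NVaux.cT hΦd s x₀]
    simp only [NVaux.cX hΦd]
    rfl
  -- Part 2 : space derivatives of the local momentum
  have hDx : ∀ v : ℝ × E3, HasFDerivAt (fun y => NVaux.dPhi φ (t₀, y) v)
      ((ContinuousLinearMap.apply ℝ ℝ v).comp ((NVaux.d2Phi φ (t₀, x₀)).comp
        ((0 : E3 →L[ℝ] ℝ).prod (ContinuousLinearMap.id ℝ E3)))) x₀ :=
    fun v => NVaux.hasFDerivAt_dPhi_x hΦ'd t₀ x₀ v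
  have hpdq : ∀ i : Fin 3, pd (fun y => qloc i t₀ y) x₀ i
      = (∫ p, p i * NVaux.dFF f (t₀, x₀, p) (NVaux.vX i)
            ∂(volume.restrict (Metric.closedBall (0:E3) (R₂+1))))
        - (NVaux.dPhi φ (t₀, x₀) NVaux.eT * NVaux.d2Phi φ (t₀, x₀) (NVaux.eX i) (NVaux.eX i)
          + NVaux.dPhi φ (t₀, x₀) (NVaux.eX i)
              * NVaux.d2Phi φ (t₀, x₀) (NVaux.eX i) NVaux.eT) := by
    intro i
    have hcPi : Continuous fun w : E3 × E3 => (w.2 i : ℝ) :=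
      ((continuous_apply i).comp (PiLp.continuous_ofLp 2 _)).comp continuous_snd
    have hcfyp : Continuous fun w : E3 × E3 => f t₀ w.1 w.2 :=
      hFc.continuous.comp (continuous_const.prodMk continuous_id)
    have hcG : Continuous fun w : E3 × E3 => (w.2 i) * f t₀ w.1 w.2 := hcPi.mul hcfyp
    have hcG' : Continuous fun w : E3 × E3 => (w.2 i) • ((NVaux.dFF f (t₀, w.1, w.2)).comp
        ((0 : E3 →L[ℝ] ℝ).prod ((ContinuousLinearMap.id ℝ E3).prod (0 : E3 →L[ℝ] E3)))) :=
      hcPi.smul ((hdFcont.comp (continuous_const.prodMk continuous_id)).clm_comp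
        continuous_const)
    obtain ⟨M2, hM2⟩ := ((isCompact_closedBall x₀ 1).prod
      hBcomp).exists_bound_of_continuousOn hcG'.continuousOn
    have hbnd2 : ∀ᵐ p ∂(volume.restrict (Metric.closedBall (0:E3) (R₂+1))),
        ∀ y ∈ Metric.ball x₀ (1:ℝ),
          ‖(p i) • ((NVaux.dFF f (t₀, y, p)).comp
            ((0 : E3 →L[ℝ] ℝ).prod ((ContinuousLinearMap.id ℝ E3).prod
              (0 : E3 →L[ℝ] E3))))‖ ≤ M2 := by
      filter_upwards [ae_restrict_mem hBmeas] with p hp y hy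
      exact hM2 (y, p) ⟨Metric.mem_closedBall.mpr (le_of_lt (Metric.mem_ball.mp hy)), hp⟩
    have key2 := hasFDerivAt_integral_of_dominated_of_fderiv_le
      (μ := volume.restrict (Metric.closedBall (0:E3) (R₂+1))) (x₀ := x₀)
      (F := fun y p => (p i) * f t₀ y p)
      (F' := fun y p => (p i) • ((NVaux.dFF f (t₀, y, p)).comp
        ((0 : E3 →L[ℝ] ℝ).prod ((ContinuousLinearMap.id ℝ E3).prod (0 : E3 →L[ℝ] E3)))))
      (bound := fun _ => M2) (Metric.ball_mem_nhds x₀ one_pos)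
      (Eventually.of_forall fun y =>
        ((hcG.comp (continuous_const.prodMk continuous_id)).aestronglyMeasurable))
      ((hcG.comp (continuous_const.prodMk continuous_id)).continuousOn.integrableOn_compact
        hBcomp)
      ((hcG'.comp (continuous_const.prodMk continuous_id)).aestronglyMeasurable)
      hbnd2 (integrableOn_const measure_closedBall_lt_top.ne)
      (Eventually.of_forall fun p y _ =>
        (NVaux.hasFDerivAt_f_x hFd t₀ y p).const_mul (p i))
    have hF'int : Integrable (fun p : E3 => (p i) • ((NVaux.dFF f (t₀, x₀, p)).comp
        ((0 : E3 →L[ℝ] ℝ).prod ((ContinuousLinearMap.id ℝ E3).prod (0 : E3 →L[ℝ] E3)))))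
        (volume.restrict (Metric.closedBall (0:E3) (R₂+1))) :=
      (hcG'.comp (continuous_const.prodMk continuous_id)).continuousOn.integrableOn_compact
        hBcomp
    have hmul := (hDx NVaux.eT).mul (hDx (NVaux.eX i))
    have hq_eq : (fun y => qloc i t₀ y) =ᶠ[𝓝 x₀] (fun y =>
        (∫ p, p i * f t₀ y p ∂(volume.restrict (Metric.closedBall (0:E3) (R₂+1))))
          - NVaux.dPhi φ (t₀, y) NVaux.eT * NVaux.dPhi φ (t₀, y) (NVaux.eX i)) := by
      filter_upwards [Metric.ball_mem_nhds x₀ one_pos] with y hy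
      rw [hqloc i t₀ y, NVaux.cT hΦd t₀ y, NVaux.cX hΦd t₀ y i]
      have h2 : (∫ p : E3, p i * f t₀ y p)
          = ∫ p, p i * f t₀ y p ∂(volume.restrict (Metric.closedBall (0:E3) (R₂+1))) := by
        refine (hint_eq _ fun p hp => ?_).symm
        rw [hfzero t₀ y p (by simp) (le_of_lt (Metric.mem_ball.mp hy)) hp, mul_zero]
      rw [h2]
    show fderiv ℝ (fun y => qloc i t₀ y) x₀ (EuclideanSpace.single i 1) = _
    rw [hq_eq.fderiv_eq, HasFDerivAt.fderiv (f := fun y =>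
        (∫ p, p i * f t₀ y p ∂(volume.restrict (Metric.closedBall (0:E3) (R₂+1))))
          - NVaux.dPhi φ (t₀, y) NVaux.eT * NVaux.dPhi φ (t₀, y) (NVaux.eX i)) (key2.sub hmul)]
    simp only [ContinuousLinearMap.coe_sub', Pi.sub_apply, ContinuousLinearMap.add_apply,
      ContinuousLinearMap.coe_smul', Pi.smul_apply, smul_eq_mul,
      ContinuousLinearMap.integral_apply hF'int, ContinuousLinearMap.coe_comp',
      Function.comp_apply, ContinuousLinearMap.prod_apply, ContinuousLinearMap.coe_id',
      id_eq, ContinuousLinearMap.zero_apply, ContinuousLinearMap.apply_apply,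
      NVaux.eX, NVaux.eT, NVaux.vX]
  -- Part 3 : assembly
  -- pointwise Vlasov identity
  have hpt : ∀ p : E3,
      ((Real.exp (2 * φ t₀ x₀) * NVaux.dPhi φ (t₀, x₀) NVaux.eT
          / Real.sqrt (Real.exp (2 * φ t₀ x₀) + ‖p‖ ^ 2)) * f t₀ x₀ p
        + Real.sqrt (Real.exp (2 * φ t₀ x₀) + ‖p‖ ^ 2) * NVaux.dFF f (t₀, x₀, p) NVaux.vT)
        + ∑ i, p i * NVaux.dFF f (t₀, x₀, p) (NVaux.vX i)
      = Real.exp (2 * φ t₀ x₀) * NVaux.dPhi φ (t₀, x₀) NVaux.eT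
          * (f t₀ x₀ p / Real.sqrt (Real.exp (2 * φ t₀ x₀) + ‖p‖ ^ 2))
        + ∑ i, (Real.exp (2 * φ t₀ x₀) * NVaux.dPhi φ (t₀, x₀) (NVaux.eX i))
            * NVaux.dFF f (t₀, x₀, p) (NVaux.vP i) := by
    intro p
    have hv := hVl t₀ x₀ p
    simp only [NVaux.fT hFd, NVaux.fX hFd, NVaux.fP hFd, NVaux.cSq hΦd] at hv
    have hσ : Real.sqrt (Real.exp (2 * φ t₀ x₀) + ‖p‖ ^ 2) ≠ 0 := ne_of_gt (hσpos t₀ p)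
    simp only [Fin.sum_univ_three] at hv ⊢
    field_simp at hv
    linear_combination hv
  -- integrability facts
  have hIx : ∀ i : Fin 3, Integrable (fun p : E3 => p i * NVaux.dFF f (t₀, x₀, p) (NVaux.vX i))
      (volume.restrict (Metric.closedBall (0:E3) (R₂+1))) := fun i =>
    (((continuous_apply i).comp (PiLp.continuous_ofLp 2 _)).mul ((ContinuousLinearMap.apply ℝ ℝ (NVaux.vX i)).continuous.comp
      (hdFcont.comp (continuous_const.prodMk
        (continuous_const.prodMk continuous_id))))).continuousOn.integrableOn_compact hBcomp
  have hIvP : ∀ i : Fin 3, Integrable (fun p : E3 => NVaux.dFF f (t₀, x₀, p) (NVaux.vP i))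
      (volume.restrict (Metric.closedBall (0:E3) (R₂+1))) := fun i =>
    ((ContinuousLinearMap.apply ℝ ℝ (NVaux.vP i)).continuous.comp
      (hdFcont.comp (continuous_const.prodMk
        (continuous_const.prodMk continuous_id)))).continuousOn.integrableOn_compact hBcomp
  have hIdiv : Integrable
      (fun p : E3 => f t₀ x₀ p / Real.sqrt (Real.exp (2 * φ t₀ x₀) + ‖p‖ ^ 2))
      (volume.restrict (Metric.closedBall (0:E3) (R₂+1))) :=
    ((hFc.continuous.comp (continuous_const.prodMk
        (continuous_const.prodMk continuous_id))).div
      ((continuous_const.add (continuous_norm.pow 2)).sqrt)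
      (fun p => ne_of_gt (hσpos t₀ p))).continuousOn.integrableOn_compact hBcomp
  -- vanishing of the momentum-derivative integrals
  have hvpzero : ∀ i : Fin 3, (∫ p, NVaux.dFF f (t₀, x₀, p) (NVaux.vP i)
      ∂(volume.restrict (Metric.closedBall (0:E3) (R₂+1)))) = 0 := by
    intro i
    have hvan : ∀ p : E3, R₂ + 1 ≤ ‖p‖ → NVaux.dFF f (t₀, x₀, p) (NVaux.vP i) = 0 := by
      intro p hp
      rw [hdFzero t₀ x₀ p (by simp) (by simp) hp]
      rfl
    rw [hint_eq _ hvan]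
    have hgC1 : ContDiff ℝ 1 (fun q : E3 => f t₀ x₀ q) :=
      hFc.comp (contDiff_const.prodMk (contDiff_const.prodMk contDiff_id))
    have hgsupp : HasCompactSupport (fun q : E3 => f t₀ x₀ q) := by
      refine HasCompactSupport.intro hBcomp fun p hp => ?_
      have h := Metric.mem_closedBall.not.mp hp
      rw [dist_zero_right] at h
      exact hfzero t₀ x₀ p (by simp) (by simp) (le_of_lt (not_le.mp h))
    have hconv : ∀ p : E3, NVaux.dFF f (t₀, x₀, p) (NVaux.vP i)
        = fderiv ℝ (fun q : E3 => f t₀ x₀ q) p (EuclideanSpace.single i 1) := by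
      intro p
      rw [(NVaux.hasFDerivAt_f_p hFd t₀ x₀ p).fderiv]
      simp [NVaux.vP]
    simp only [hconv]
    exact NVaux.integral_fderiv_apply_eq_zero hgC1 hgsupp _
  have hfσ_eq : (∫ p, f t₀ x₀ p / Real.sqrt (Real.exp (2 * φ t₀ x₀) + ‖p‖ ^ 2)
        ∂(volume.restrict (Metric.closedBall (0:E3) (R₂+1))))
      = ∫ p : E3, f t₀ x₀ p / Real.sqrt (Real.exp (2 * φ t₀ x₀) + ‖p‖ ^ 2) := by
    refine hint_eq _ fun p hp => ?_
    rw [hfzero t₀ x₀ p (by simp) (by simp) hp, zero_div]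
  -- the combined integral identity
  have hintsum : (∫ p, ((Real.exp (2 * φ t₀ x₀) * NVaux.dPhi φ (t₀, x₀) NVaux.eT
            / Real.sqrt (Real.exp (2 * φ t₀ x₀) + ‖p‖ ^ 2)) * f t₀ x₀ p
          + Real.sqrt (Real.exp (2 * φ t₀ x₀) + ‖p‖ ^ 2) * NVaux.dFF f (t₀, x₀, p) NVaux.vT)
          ∂(volume.restrict (Metric.closedBall (0:E3) (R₂+1))))
        + ∑ i, (∫ p, p i * NVaux.dFF f (t₀, x₀, p) (NVaux.vX i)
            ∂(volume.restrict (Metric.closedBall (0:E3) (R₂+1))))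
      = Real.exp (2 * φ t₀ x₀) * NVaux.dPhi φ (t₀, x₀) NVaux.eT
          * ∫ p : E3, f t₀ x₀ p / Real.sqrt (Real.exp (2 * φ t₀ x₀) + ‖p‖ ^ 2) := by
    rw [← integral_finset_sum _ (fun i (_ : i ∈ Finset.univ) => hIx i)]
    rw [← integral_add key1.1 (integrable_finset_sum _ (fun i (_ : i ∈ Finset.univ) => hIx i))]
    rw [integral_congr_ae (Eventually.of_forall hpt)]
    rw [integral_add (hIdiv.const_mul _)
      (integrable_finset_sum _ (fun i (_ : i ∈ Finset.univ) => (hIvP i).const_mul _))]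
    rw [integral_const_mul, integral_finset_sum _ (fun i (_ : i ∈ Finset.univ) =>
      (hIvP i).const_mul _)]
    have hz : ∀ i : Fin 3, (∫ p, (Real.exp (2 * φ t₀ x₀) * NVaux.dPhi φ (t₀, x₀) (NVaux.eX i))
        * NVaux.dFF f (t₀, x₀, p) (NVaux.vP i)
        ∂(volume.restrict (Metric.closedBall (0:E3) (R₂+1)))) = 0 := by
      intro i
      rw [integral_const_mul, hvpzero i, mul_zero]
    simp only [hz, Finset.sum_const_zero, add_zero]
    rw [hfσ_eq]
  -- wave equation and symmetry of second derivatives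
  have hwave := hWv t₀ x₀
  rw [NVaux.cTT hΦd hΦ'd t₀ x₀] at hwave
  simp only [NVaux.cXX hΦd hΦ'd] at hwave
  have h1 : ∑ i, NVaux.dPhi φ (t₀, x₀) (NVaux.eX i) * NVaux.d2Phi φ (t₀, x₀) NVaux.eT (NVaux.eX i)
      = ∑ i, NVaux.dPhi φ (t₀, x₀) (NVaux.eX i) * NVaux.d2Phi φ (t₀, x₀) (NVaux.eX i) NVaux.eT :=
    Finset.sum_congr rfl fun i _ => by rw [NVaux.symmPhi hΦc t₀ x₀ NVaux.eT (NVaux.eX i)]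
  have h2 : ∑ i, (NVaux.dPhi φ (t₀, x₀) NVaux.eT
        * NVaux.d2Phi φ (t₀, x₀) (NVaux.eX i) (NVaux.eX i)
      + NVaux.dPhi φ (t₀, x₀) (NVaux.eX i) * NVaux.d2Phi φ (t₀, x₀) (NVaux.eX i) NVaux.eT)
      = NVaux.dPhi φ (t₀, x₀) NVaux.eT
          * ∑ i, NVaux.d2Phi φ (t₀, x₀) (NVaux.eX i) (NVaux.eX i)
        + ∑ i, NVaux.dPhi φ (t₀, x₀) (NVaux.eX i)
            * NVaux.d2Phi φ (t₀, x₀) (NVaux.eX i) NVaux.eT := by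
    rw [Finset.sum_add_distrib, Finset.mul_sum]
  rw [hEder.deriv]
  simp only [hpdq]
  rw [Finset.sum_sub_distrib]
  linear_combination hintsum + h1 - h2 + NVaux.dPhi φ (t₀, x₀) NVaux.eT * hwave
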